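/- If G is a connected graph with diameter D and edge metric dimension k, then the number of edges of G is at most (D-c)^k + k·∑_{i=0}^{c} (2i+2)^{k-1}, where c = ⌈D/3⌉ - 1; equivalently |E(G)| ≤ (⌊2D/3⌋+1)^k + k·∑_{i=1}^{⌈D/3⌉}(2i)^{k-1}. -/

import Mathlib

open SimpleGraph Finset

/-- Distance from an edge (as an unordered pair) to a vertex: the minimum
of the distances from the two endpoints. -/
noncomputable def edgeVertexDist {V : Type*} (G : SimpleGraph V) (e : Sym2 V) (v : V) : ℕ :=
  Sym2.lift ⟨fun x y => min (G.dist x v) (G.dist y v), fun x y => by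
    simp [min_comm]⟩ e

/-- `S` is a resolving set for the vertices of `G`. -/
def IsResolvingSet {V : Type*} (G : SimpleGraph V) (S : Set V) : Prop :=
  ∀ u w : V, (∀ s ∈ S, G.dist u s = G.dist w s) → u = w

/-- `S` is a resolving set for the edges of `G`. -/
def IsEdgeResolvingSet {V : Type*} (G : SimpleGraph V) (S : Set V) : Prop :=
  ∀ e ∈ G.edgeSet, ∀ f ∈ G.edgeSet,
    (∀ s ∈ S, edgeVertexDist G e s = edgeVertexDist G f s) → e = f

/-- The metric dimension of `G`. -/
noncomputable def metricDim {V : Type*} (G : SimpleGraph V) : ℕ :=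
  sInf {k | ∃ S : Finset V, S.card = k ∧ IsResolvingSet G (S : Set V)}

/-- The edge metric dimension of `G`. -/
noncomputable def edgeMetricDim {V : Type*} (G : SimpleGraph V) : ℕ :=
  sInf {k | ∃ S : Finset V, S.card = k ∧ IsEdgeResolvingSet G (S : Set V)}

set_option linter.unusedSectionVars false

section Aux
variable {V : Type*} [Fintype V] [DecidableEq V] (G : SimpleGraph V)

lemma evd_mk (x y v : V) : edgeVertexDist G s(x,y) v = min (G.dist x v) (G.dist y v) := rfl

lemma evd_le_diam (hne : G.ediam ≠ ⊤) (e : Sym2 V) (v : V) :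
    edgeVertexDist G e v ≤ G.diam := by
  induction e using Sym2.ind with | _ x y =>
  exact le_trans (min_le_left _ _) (G.dist_le_diam hne)

lemma evd_triangle (hG : G.Connected) {e : Sym2 V} (he : e ∈ G.edgeSet) (s t : V) :
    edgeVertexDist G e t ≤ G.dist s t + edgeVertexDist G e s ∧
    G.dist s t ≤ edgeVertexDist G e t + edgeVertexDist G e s + 1 := by
  induction e using Sym2.ind with | _ x y =>
  rw [SimpleGraph.mem_edgeSet] at he
  rw [evd_mk, evd_mk]
  have hxy : G.dist x y = 1 := by rw [SimpleGraph.dist_eq_one_iff_adj]; exact he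
  have hyx : G.dist y x = 1 := by rw [SimpleGraph.dist_comm]; exact hxy
  have t1 : G.dist x s ≤ G.dist x y + G.dist y s := hG.dist_triangle
  have t2 : G.dist y s ≤ G.dist y x + G.dist x s := hG.dist_triangle
  have t3 : G.dist x t ≤ G.dist x s + G.dist s t := hG.dist_triangle
  have t4 : G.dist y t ≤ G.dist y s + G.dist s t := hG.dist_triangle
  have t5 : G.dist s t ≤ G.dist s x + G.dist x t := hG.dist_triangle
  have t6 : G.dist s t ≤ G.dist s y + G.dist y t := hG.dist_triangle
  have c1 : G.dist s x = G.dist x s := SimpleGraph.dist_comm ..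
  have c2 : G.dist s y = G.dist y s := SimpleGraph.dist_comm ..
  omega

variable [DecidableRel G.Adj]

lemma key_bound (hG : G.Connected) (hne : G.ediam ≠ ⊤) (k c : ℕ)
    (S : Finset V) (hS : S.card = k) (hRes : IsEdgeResolvingSet G (S : Set V)) :
    G.edgeFinset.card ≤
      (G.diam - c) ^ k + k * ∑ i ∈ Finset.range (c + 1), (2 * i + 2) ^ (k - 1) := by
  classical
  set D := G.diam with hD
  set A := G.edgeFinset.filter (fun e => ∀ s ∈ S, c < edgeVertexDist G e s) with hA
  set B := G.edgeFinset.filter (fun e => ¬ ∀ s ∈ S, c < edgeVertexDist G e s) with hB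
  have hsplit : A.card + B.card = G.edgeFinset.card :=
    Finset.card_filter_add_card_filter_not _
  -- bound A
  have hAcard : A.card ≤ (D - c) ^ k := by
    have h1 : A.card ≤ (Fintype.piFinset (fun _ : ↥S => Finset.Icc (c + 1) D)).card := by
      apply Finset.card_le_card_of_injOn (fun e => fun s : ↥S => edgeVertexDist G e s)
      · intro e he
        rw [Finset.mem_coe, Finset.mem_filter] at he
        rw [Finset.mem_coe, Fintype.mem_piFinset]
        intro s
        rw [Finset.mem_Icc]
        exact ⟨he.2 s s.2, evd_le_diam G hne e s⟩
      · intro e he f hf hef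
        rw [Finset.mem_coe, Finset.mem_filter, SimpleGraph.mem_edgeFinset] at he hf
        apply hRes e he.1 f hf.1
        intro s hs
        exact congrFun hef ⟨s, hs⟩
    calc A.card ≤ _ := h1
      _ = (D - c) ^ k := by
          rw [Fintype.card_piFinset]
          simp [Nat.card_Icc, ← hS, Fintype.card_coe]
  -- bound B
  have hBcard : B.card ≤ k * ∑ i ∈ Finset.range (c + 1), (2 * i + 2) ^ (k - 1) := by
    have hsub : B ⊆ S.biUnion (fun s => (Finset.range (c + 1)).biUnion
        (fun i => G.edgeFinset.filter (fun e => edgeVertexDist G e s = i))) := by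
      intro e he
      rw [hB, Finset.mem_filter] at he
      push_neg at he
      obtain ⟨he1, s, hs, hle⟩ := he
      rw [Finset.mem_biUnion]
      refine ⟨s, hs, ?_⟩
      rw [Finset.mem_biUnion]
      exact ⟨edgeVertexDist G e s, Finset.mem_range.mpr (by omega), Finset.mem_filter.mpr ⟨he1, rfl⟩⟩
    have hone : ∀ s ∈ S, ∀ i ∈ Finset.range (c + 1),
        (G.edgeFinset.filter (fun e => edgeVertexDist G e s = i)).card ≤ (2 * i + 2) ^ (k - 1) := by
      intro s hs i _
      have h1 : (G.edgeFinset.filter (fun e => edgeVertexDist G e s = i)).card ≤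
          (Fintype.piFinset (fun _ : ↥(S.erase s) => Finset.range (2 * i + 2))).card := by
        apply Finset.card_le_card_of_injOn
          (fun e => fun t : ↥(S.erase s) => edgeVertexDist G e t + (i + 1) - G.dist s t)
        · intro e he
          rw [Finset.mem_coe, Finset.mem_filter, SimpleGraph.mem_edgeFinset] at he
          rw [Finset.mem_coe, Fintype.mem_piFinset]
          intro t
          rw [Finset.mem_range]
          have := evd_triangle G hG he.1 s (t : V)
          beta_reduce
          omega
        · intro e he f hf hef
          rw [Finset.mem_coe, Finset.mem_filter, SimpleGraph.mem_edgeFinset] at he hf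
          apply hRes e he.1 f hf.1
          intro t ht
          by_cases hts : t = s
          · rw [hts, he.2, hf.2]
          · have htm : t ∈ S.erase s := Finset.mem_erase.mpr ⟨hts, ht⟩
            have := congrFun hef ⟨t, htm⟩
            simp only at this
            have h2 := evd_triangle G hG he.1 s t
            have h3 := evd_triangle G hG hf.1 s t
            rw [he.2] at h2
            rw [hf.2] at h3
            omega
      calc _ ≤ _ := h1
        _ = (2 * i + 2) ^ (k - 1) := by
            rw [Fintype.card_piFinset]
            simp [Fintype.card_coe, Finset.card_erase_of_mem hs, hS]
    calc B.card ≤ _ := Finset.card_le_card hsub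
      _ ≤ ∑ s ∈ S, ((Finset.range (c + 1)).biUnion
            (fun i => G.edgeFinset.filter (fun e => edgeVertexDist G e s = i))).card :=
          Finset.card_biUnion_le
      _ ≤ ∑ s ∈ S, ∑ i ∈ Finset.range (c + 1),
            (G.edgeFinset.filter (fun e => edgeVertexDist G e s = i)).card :=
          Finset.sum_le_sum (fun s _ => Finset.card_biUnion_le)
      _ ≤ ∑ s ∈ S, ∑ i ∈ Finset.range (c + 1), (2 * i + 2) ^ (k - 1) :=
          Finset.sum_le_sum (fun s hs => Finset.sum_le_sum (hone s hs))
      _ = k * ∑ i ∈ Finset.range (c + 1), (2 * i + 2) ^ (k - 1) := by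
          rw [Finset.sum_const, hS, smul_eq_mul]
  omega

end Aux


lemma univ_isEdgeResolving {V : Type*} [Fintype V] [DecidableEq V] (G : SimpleGraph V)
    (hG : G.Connected) :
    IsEdgeResolvingSet G ((Finset.univ : Finset V) : Set V) := by
  intro e he f hf h
  induction e using Sym2.ind with | _ x y =>
  rw [SimpleGraph.mem_edgeSet] at he
  have hx : edgeVertexDist G f x = 0 := by
    have := h x (by simp)
    rw [evd_mk] at this
    simp [SimpleGraph.dist_self] at this
    omega
  have hy : edgeVertexDist G f y = 0 := by
    have := h y (by simp)
    rw [evd_mk] at this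
    simp [SimpleGraph.dist_self] at this
    omega
  induction f using Sym2.ind with | _ u w =>
  rw [evd_mk] at hx hy
  have hux : u = x ∨ w = x := by
    rcases Nat.min_eq_zero_iff.mp hx with h' | h'
    · exact Or.inl ((hG.dist_eq_zero_iff).mp h')
    · exact Or.inr ((hG.dist_eq_zero_iff).mp h')
  have huy : u = y ∨ w = y := by
    rcases Nat.min_eq_zero_iff.mp hy with h' | h'
    · exact Or.inl ((hG.dist_eq_zero_iff).mp h')
    · exact Or.inr ((hG.dist_eq_zero_iff).mp h')
  have hne : x ≠ y := he.ne
  rcases hux with rfl | rfl <;> rcases huy with rfl | rfl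
  · exact absurd rfl hne
  · rfl
  · exact Sym2.eq_swap
  · exact absurd rfl hne

lemma ediam_ne_top {V : Type*} [Fintype V] (G : SimpleGraph V) (hG : G.Connected) :
    G.ediam ≠ ⊤ := by
  have : Nonempty V := hG.nonempty
  obtain ⟨u, v, huv⟩ := G.exists_edist_eq_ediam_of_finite
  rw [← huv]
  exact SimpleGraph.edist_ne_top_iff_reachable.mpr (hG u v)

/-- If `G` is a connected graph with diameter `D` and edge metric dimension `k`,
then `|E(G)| ≤ (D-c)^k + k·∑_{i=0}^{c} (2i+2)^{k-1}` where `c = ⌈D/3⌉ - 1`;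
equivalently `|E(G)| ≤ (⌊2D/3⌋+1)^k + k·∑_{i=1}^{⌈D/3⌉} (2i)^{k-1}`. -/
theorem stmt_0 {V : Type*} [Fintype V] [DecidableEq V] (G : SimpleGraph V)
    [DecidableRel G.Adj] (hG : G.Connected) (D k : ℕ)
    (hD : G.diam = D) (hk : edgeMetricDim G = k) :
    G.edgeFinset.card ≤
        (D - ((D + 2) / 3 - 1)) ^ k +
          k * ∑ i ∈ Finset.range ((D + 2) / 3 - 1 + 1), (2 * i + 2) ^ (k - 1) ∧
    G.edgeFinset.card ≤
        (2 * D / 3 + 1) ^ k +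
          k * ∑ i ∈ Finset.Icc 1 ((D + 2) / 3), (2 * i) ^ (k - 1) := by
  have hne : G.ediam ≠ ⊤ := ediam_ne_top G hG
  have hnonempty : {n | ∃ S : Finset V, S.card = n ∧ IsEdgeResolvingSet G (S : Set V)}.Nonempty :=
    ⟨(Finset.univ : Finset V).card, Finset.univ, rfl, univ_isEdgeResolving G hG⟩
  obtain ⟨S, hS, hRes⟩ : ∃ S : Finset V, S.card = k ∧ IsEdgeResolvingSet G (S : Set V) := by
    have := Nat.sInf_mem hnonempty
    rwa [show sInf _ = k from hk] at this
  have h1 := key_bound G hG hne k ((D + 2) / 3 - 1) S hS hRes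
  rw [hD] at h1
  refine ⟨h1, ?_⟩
  rcases Nat.eq_zero_or_pos D with hD0 | hDpos
  · -- D = 0 : the graph has no edges
    have hed0 : G.ediam = 0 := by
      have : G.ediam.toNat = 0 := by rw [← SimpleGraph.diam, hD, hD0]
      exact (ENat.toNat_eq_zero.mp this).resolve_right hne
    have hsub : ∀ u v : V, u = v := by
      intro u v
      have h2 : G.edist u v = 0 :=
        le_antisymm (hed0 ▸ SimpleGraph.edist_le_ediam) zero_le
      exact SimpleGraph.edist_eq_zero_iff.mp h2
    have : G.edgeFinset.card = 0 := by
      rw [Finset.card_eq_zero, Finset.eq_empty_iff_forall_notMem]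
      intro e he
      induction e using Sym2.ind with | _ x y =>
      rw [SimpleGraph.mem_edgeFinset, SimpleGraph.mem_edgeSet] at he
      exact he.ne (hsub x y)
    rw [this]
    exact Nat.zero_le _
  · -- D ≥ 1 : the two bounds coincide
    have e1 : D - ((D + 2) / 3 - 1) = 2 * D / 3 + 1 := by omega
    have e2 : ∑ i ∈ Finset.Icc 1 ((D + 2) / 3), (2 * i) ^ (k - 1)
        = ∑ i ∈ Finset.range ((D + 2) / 3 - 1 + 1), (2 * i + 2) ^ (k - 1) := by
      rw [show Finset.Icc 1 ((D + 2) / 3) = Finset.Ico 1 ((D + 2) / 3 + 1) from by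
        rw [Finset.Ico_add_one_right_eq_Icc]]
      rw [Finset.sum_Ico_eq_sum_range]
      rw [show (D + 2) / 3 + 1 - 1 = (D + 2) / 3 - 1 + 1 from by omega]
      apply Finset.sum_congr rfl
      intro i _
      congr 1
      omega
    rw [e2]
    rw [e1] at h1
    exact h1
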